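/- Let Q be a ground disjunctive logic program, let U be a set of literals none of which occurs in the head of any rule of Q, and let S be a consistent set of literals with S ⊆ U. For each rule r ∈ Q, let its U-part consist of the literals of pbody(r) ∩ U and nbody(r) ∩ U. Let Q[S] be the program obtained from Q by deleting every rule r such that some literal of pbody(r) ∩ U is not in S or some literal of nbody(r) ∩ U is in S, and by removing the U-part from the bodies of the remaining rules. Then Q ∪ S and Q[S] ∪ S have exactly the same answer sets (where Π ∪ S denotes Π extended with the literals of S as facts). -/

import Mathlib

open scoped Classical

namespace ASP

universe u v

/-- A ground literal: an atom together with a sign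
(`true` for the atom itself, `false` for its strong negation `¬a`).
The atom `|l|` of a literal `l` is its first component `l.1`. -/
abbrev Lit (α : Type u) : Type u := α × Bool

/-- A ground disjunctive rule, consisting of three finite sets of literals:
head, positive body and negative body. -/
structure Rule (α : Type u) : Type u where
  head : Finset (Lit α)
  pbody : Finset (Lit α)
  nbody : Finset (Lit α)
deriving DecidableEq

variable {α : Type u}

/-- A set of literals is consistent if it contains no atom together with
its strong negation. -/
def Consistent (S : Set (Lit α)) : Prop :=
  ∀ a : α, ¬((a, true) ∈ S ∧ (a, false) ∈ S)

/-- `S` satisfies a rule `r`: the head intersects `S` whenever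
`pbody(r) ⊆ S` and `nbody(r) ∩ S = ∅`. -/
def SatRule (S : Set (Lit α)) (r : Rule α) : Prop :=
  ((∀ l ∈ r.pbody, l ∈ S) ∧ (∀ l ∈ r.nbody, l ∉ S)) → ∃ l ∈ r.head, l ∈ S

/-- Answer sets of a positive program: `⊆`-minimal consistent sets of
literals satisfying all rules. -/
def IsAnswerSetPos (P : Set (Rule α)) (S : Set (Lit α)) : Prop :=
  Consistent S ∧ (∀ r ∈ P, SatRule S r) ∧
    ∀ T : Set (Lit α), Consistent T → (∀ r ∈ P, SatRule T r) → T ⊆ S → T = S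

/-- The reduct `Π^S` of a program w.r.t. a set of literals `S`. -/
def reduct (P : Set (Rule α)) (S : Set (Lit α)) : Set (Rule α) :=
  {x | ∃ r ∈ P, (∀ l ∈ r.nbody, l ∉ S) ∧ x = ⟨r.head, r.pbody, ∅⟩}

/-- `S` is an answer set of `P` iff `S` is an answer set of the positive
program `P^S`. -/
def IsAnswerSet (P : Set (Rule α)) (S : Set (Lit α)) : Prop :=
  IsAnswerSetPos (reduct P S) S

/-- `Lit(Π)`: the literals occurring in a program. -/
def litsOf (P : Set (Rule α)) : Set (Lit α) :=
  {l | ∃ r ∈ P, l ∈ r.head ∨ l ∈ r.pbody ∨ l ∈ r.nbody}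

/-- Edges of the positive dependency graph: from each head literal of a
rule to each of its positive body literals. -/
def DepEdge (P : Set (Rule α)) (l l' : Lit α) : Prop :=
  ∃ r ∈ P, l ∈ r.head ∧ l' ∈ r.pbody

/-- Head-cycle freeness: no two distinct literals occurring together in
some rule head lie on a common cycle of the positive dependency graph. -/
def HeadCycleFree (P : Set (Rule α)) : Prop :=
  ∀ r ∈ P, ∀ l ∈ r.head, ∀ l' ∈ r.head, l ≠ l' →
    ¬(Relation.ReflTransGen (DepEdge P) l l' ∧ Relation.ReflTransGen (DepEdge P) l' l)

/-- `P ∪ S`: the program `P` extended with the literals of `S` as facts. -/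
def withFacts (P : Set (Rule α)) (S : Set (Lit α)) : Set (Rule α) :=
  P ∪ {x | ∃ l ∈ S, x = ⟨{l}, ∅, ∅⟩}

/-- Partial evaluation `Q[S]` of `Q` w.r.t. `U` and `S`: delete every rule
whose `U`-part of the body is false in `S`, and remove the `U`-part from
the bodies of the remaining rules. -/
def peval {α : Type u} (Q : Set (Rule α)) (U S : Set (Lit α)) : Set (Rule α) :=
  {x | ∃ r ∈ Q,
    (∀ l ∈ r.pbody, l ∈ U → l ∈ S) ∧ (∀ l ∈ r.nbody, l ∈ U → l ∉ S) ∧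
    x = ⟨r.head, r.pbody.filter (fun l => l ∉ U), r.nbody.filter (fun l => l ∉ U)⟩}

lemma facts_sub {P : Set (Rule α)} {S T W : Set (Lit α)}
    (h : ∀ r ∈ reduct (withFacts P S) T, SatRule W r) : S ⊆ W := by
  intro l hl
  have hr : (⟨{l}, ∅, ∅⟩ : Rule α) ∈ reduct (withFacts P S) T :=
    ⟨⟨{l}, ∅, ∅⟩, Or.inr ⟨l, hl, rfl⟩, by simp, rfl⟩
  have := h _ hr ⟨by simp, by simp⟩
  simpa using this

lemma inter_sub {P : Set (Rule α)} {S U T : Set (Lit α)}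
    (hU : ∀ r ∈ P, ∀ l ∈ r.head, l ∉ U)
    (hT : IsAnswerSet (withFacts P S) T) :
    ∀ l ∈ T, l ∈ U → l ∈ S := by
  obtain ⟨hc, hsat, hmin⟩ := hT
  have hST : S ⊆ T := facts_sub hsat
  set T' : Set (Lit α) := (T \ U) ∪ S with hT'def
  have hT'sub : T' ⊆ T := by
    intro l hl
    rcases hl with h | h
    · exact h.1
    · exact hST h
  have hc' : Consistent T' := fun a h => hc a ⟨hT'sub h.1, hT'sub h.2⟩
  have hsat' : ∀ r ∈ reduct (withFacts P S) T, SatRule T' r := by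
    rintro r ⟨r0, hr0, hnb, rfl⟩
    rcases hr0 with hr0 | ⟨l, hl, rfl⟩
    · intro hbody
      have hpb : ∀ l ∈ r0.pbody, l ∈ T := fun l hl => hT'sub (hbody.1 l hl)
      obtain ⟨l, hlh, hlT⟩ :=
        hsat _ ⟨r0, Or.inl hr0, hnb, rfl⟩ ⟨hpb, by simp⟩
      exact ⟨l, hlh, Or.inl ⟨hlT, hU r0 hr0 l hlh⟩⟩
    · intro _
      exact ⟨l, by simp, Or.inr hl⟩
  have heq := hmin T' hc' hsat' hT'sub
  intro l hlT hlU
  rw [← heq] at hlT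
  rcases hlT with h | h
  · exact absurd hlU h.2
  · exact h

lemma sat_iff {Q : Set (Rule α)} {U S T W : Set (Lit α)}
    (hST : S ⊆ T) (hSW : S ⊆ W)
    (hTU : ∀ l ∈ T, l ∈ U → l ∈ S) (hWU : ∀ l ∈ W, l ∈ U → l ∈ S) :
    (∀ r ∈ reduct (withFacts Q S) T, SatRule W r) ↔
    (∀ r ∈ reduct (withFacts (peval Q U S) S) T, SatRule W r) := by
  constructor
  · intro h
    rintro r ⟨r0, hr0, hnb, rfl⟩
    rcases hr0 with hr0 | ⟨l, hl, rfl⟩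
    · obtain ⟨r1, hr1, hpU, hnU, rfl⟩ := hr0
      intro hbody
      have hnbT : ∀ l ∈ r1.nbody, l ∉ T := by
        intro l hl hlT
        by_cases hlU : l ∈ U
        · exact hnU l hl hlU (hTU l hlT hlU)
        · exact hnb l (Finset.mem_filter.mpr ⟨hl, hlU⟩) hlT
      have hpbW : ∀ l ∈ r1.pbody, l ∈ W := by
        intro l hl
        by_cases hlU : l ∈ U
        · exact hSW (hpU l hl hlU)
        · exact hbody.1 l (Finset.mem_filter.mpr ⟨hl, hlU⟩)
      exact h ⟨r1.head, r1.pbody, ∅⟩ ⟨r1, Or.inl hr1, hnbT, rfl⟩ ⟨hpbW, by simp⟩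
    · intro _
      exact ⟨l, by simp, hSW hl⟩
  · intro h
    rintro r ⟨r0, hr0, hnb, rfl⟩
    rcases hr0 with hr0 | ⟨l, hl, rfl⟩
    · intro hbody
      have hpU : ∀ l ∈ r0.pbody, l ∈ U → l ∈ S :=
        fun l hl hlU => hWU l (hbody.1 l hl) hlU
      have hnU : ∀ l ∈ r0.nbody, l ∈ U → l ∉ S :=
        fun l hl _ hlS => hnb l hl (hST hlS)
      have hmem : (⟨r0.head, r0.pbody.filter (fun l => l ∉ U),
          r0.nbody.filter (fun l => l ∉ U)⟩ : Rule α) ∈ peval Q U S :=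
        ⟨r0, hr0, hpU, hnU, rfl⟩
      have hnbT : ∀ l ∈ r0.nbody.filter (fun l => l ∉ U), l ∉ T :=
        fun l hl => hnb l (Finset.mem_filter.mp hl).1
      have hpbW : ∀ l ∈ r0.pbody.filter (fun l => l ∉ U), l ∈ W :=
        fun l hl => hbody.1 l (Finset.mem_filter.mp hl).1
      exact h ⟨r0.head, r0.pbody.filter (fun l => l ∉ U), ∅⟩ ⟨_, Or.inl hmem, hnbT, rfl⟩ ⟨hpbW, by simp⟩
    · intro _
      exact ⟨l, by simp, hSW hl⟩

/-- If no literal of `U` occurs in a head of `Q` and `S ⊆ U` is consistent,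
then `Q ∪ S` and `Q[S] ∪ S` have exactly the same answer sets. -/
theorem statement9 {α : Type u} (Q : Set (Rule α)) (hfin : Q.Finite)
    (U : Set (Lit α)) (hU : ∀ r ∈ Q, ∀ l ∈ r.head, l ∉ U)
    (S : Set (Lit α)) (hcons : Consistent S) (hSU : S ⊆ U) :
    ∀ T : Set (Lit α),
      IsAnswerSet (withFacts Q S) T ↔ IsAnswerSet (withFacts (peval Q U S) S) T := by
  have hU' : ∀ r ∈ peval Q U S, ∀ l ∈ r.head, l ∉ U := by
    rintro r ⟨r1, hr1, _, _, rfl⟩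
    exact hU r1 hr1
  intro T
  constructor
  · intro hT
    have hTU := inter_sub hU hT
    obtain ⟨hc, hsat, hmin⟩ := hT
    have hST : S ⊆ T := facts_sub hsat
    refine ⟨hc, (sat_iff hST hST hTU hTU).mp hsat, ?_⟩
    intro W hWc hWsat hWT
    have hSW : S ⊆ W := facts_sub hWsat
    have hWU : ∀ l ∈ W, l ∈ U → l ∈ S := fun l hl hlU => hTU l (hWT hl) hlU
    exact hmin W hWc ((sat_iff hST hSW hTU hWU).mpr hWsat) hWT
  · intro hT
    have hTU := inter_sub hU' hT
    obtain ⟨hc, hsat, hmin⟩ := hT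
    have hST : S ⊆ T := facts_sub hsat
    refine ⟨hc, (sat_iff hST hST hTU hTU).mpr hsat, ?_⟩
    intro W hWc hWsat hWT
    have hSW : S ⊆ W := facts_sub hWsat
    have hWU : ∀ l ∈ W, l ∈ U → l ∈ S := fun l hl hlU => hTU l (hWT hl) hlU
    exact hmin W hWc ((sat_iff hST hSW hTU hWU).mp hWsat) hWT

end ASP
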